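/- Let (Ω, μ) be a finite measure space and V a finite-dimensional subspace of the real vector space of measurable functions Ω → ℝ such that every v ∈ V lies in L⁴(μ). Let N be a norm on V, let q be a symmetric bilinear form on V satisfying q(v, v) ≥ C₀ N(v)² for all v ∈ V and some constant C₀ > 0, let L : V → ℝ be a linear functional, let c ∈ ℝ, and let ε ≤ 1. Define G : V → ℝ by G(v) := (1/2) q(v, v) + (1/4) ∫_Ω (v + c)⁴ dμ + ((1−ε)/2) ∫_Ω (v + c)² dμ + L(v). Then G has a unique global minimizer: there exists a unique v* ∈ V such that G(v*) ≤ G(v) for all v ∈ V. -/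

import Mathlib

open MeasureTheory Filter
open scoped ENNReal

theorem pfc_aux_min {E : Type*} [NormedAddCommGroup E] [NormedSpace ℝ E]
    [FiniteDimensional ℝ E] {G : E → ℝ}
    (hsc : StrictConvexOn ℝ Set.univ G)
    (hcoer : Tendsto G (cocompact E) atTop) :
    ∃! x : E, ∀ y, G x ≤ G y := by
  have hcont : Continuous G :=
    continuousOn_univ.mp (hsc.convexOn.continuousOn isOpen_univ)
  obtain ⟨x, hx⟩ := hcont.exists_forall_le hcoer
  exact ⟨x, hx, fun y hy =>
    hsc.eq_of_isMinOn (isMinOn_univ_iff.mpr hy) (isMinOn_univ_iff.mpr hx)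
      (Set.mem_univ _) (Set.mem_univ _)⟩

theorem pfc_aux {E : Type*} [NormedAddCommGroup E] [NormedSpace ℝ E]
    [FiniteDimensional ℝ E]
    (q : E →ₗ[ℝ] E →ₗ[ℝ] ℝ) (hqsymm : ∀ v w : E, q v w = q w v)
    (C₀ : ℝ) (hC₀ : 0 < C₀) (hqcoer : ∀ v : E, C₀ * ‖v‖ ^ 2 ≤ q v v)
    (L : E →ₗ[ℝ] ℝ) (I4 I2 : E → ℝ)
    (hI4conv : ConvexOn ℝ Set.univ I4) (hI2conv : ConvexOn ℝ Set.univ I2)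
    (hI4nn : ∀ v, 0 ≤ I4 v) (hI2nn : ∀ v, 0 ≤ I2 v)
    (k2 : ℝ) (hk2 : 0 ≤ k2)
    (G : E → ℝ)
    (hG : ∀ v, G v = (1/2 : ℝ) * q v v + (1/4 : ℝ) * I4 v + k2 * I2 v + L v) :
    ∃! x : E, ∀ y, G x ≤ G y := by
  -- strict convexity of the quadratic part
  have hq_sc : StrictConvexOn ℝ (Set.univ : Set E) (fun v => (1/2 : ℝ) * q v v) := by
    refine ⟨convex_univ, fun v _ w _ hvw a b ha hb hab => ?_⟩
    have key : a * q v v + b * q w w - q (a • v + b • w) (a • v + b • w)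
        = a * b * q (v - w) (v - w) := by
      have hb' : b = 1 - a := by linarith
      subst hb'
      simp only [map_add, _root_.map_smul, map_sub, LinearMap.add_apply,
        LinearMap.smul_apply, LinearMap.sub_apply, smul_eq_mul]
      rw [hqsymm w v]
      ring
    have hpos : 0 < q (v - w) (v - w) := by
      have hne : v - w ≠ 0 := sub_ne_zero.mpr hvw
      have hNpos : 0 < ‖v - w‖ := norm_pos_iff.mpr hne
      exact lt_of_lt_of_le (by positivity) (hqcoer (v - w))
    have hprod := mul_pos (mul_pos ha hb) hpos
    simp only [smul_eq_mul]
    nlinarith [key, hprod]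
  have convL : ConvexOn ℝ (Set.univ : Set E) (fun v => L v) :=
    ⟨convex_univ, fun v _ w _ a b _ _ _ => le_of_eq (by
      simp only [map_add, _root_.map_smul, smul_eq_mul])⟩
  have hGsc : StrictConvexOn ℝ (Set.univ : Set E) G := by
    have hrest : ConvexOn ℝ (Set.univ : Set E)
        ((((1/4 : ℝ) • I4) + (k2 • I2)) + fun v => L v) :=
      ((hI4conv.smul (by norm_num)).add (hI2conv.smul hk2)).add convL
    have h := hq_sc.add_convexOn hrest
    have hfun : G = (fun v => (1/2 : ℝ) * q v v)
        + ((((1/4 : ℝ) • I4) + (k2 • I2)) + fun v => L v) := by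
      funext v
      simp only [Pi.add_apply, Pi.smul_apply, smul_eq_mul, hG v]
      ring
    rw [hfun]; exact h
  -- coercivity
  set L' : E →L[ℝ] ℝ := LinearMap.toContinuousLinearMap L with hL'
  have hlow : ∀ v : E, ‖v‖ * (C₀/2 * ‖v‖ - ‖L'‖) ≤ G v := by
    intro v
    rw [hG v]
    have hq := hqcoer v
    have hL : -(‖L'‖ * ‖v‖) ≤ L v := by
      have h := L'.le_opNorm v
      have h' : |L v| ≤ ‖L'‖ * ‖v‖ := by
        simpa [Real.norm_eq_abs, hL'] using h
      linarith [neg_abs_le (L v), (abs_le.mp h').1]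
    nlinarith [mul_nonneg hk2 (hI2nn v), hI4nn v]
  have hcoer : Tendsto G (cocompact E) atTop := by
    have h2 : Tendsto (fun t : ℝ => C₀/2 * t - ‖L'‖) atTop atTop := by
      simpa [sub_eq_add_neg] using
        (tendsto_atTop_add_const_right atTop (-‖L'‖)
          (tendsto_id.const_mul_atTop (by positivity : (0:ℝ) < C₀/2)))
    have h1 : Tendsto (fun t : ℝ => t * (C₀/2 * t - ‖L'‖)) atTop atTop :=
      Tendsto.atTop_mul_atTop₀ tendsto_id h2
    exact tendsto_atTop_mono hlow (h1.comp tendsto_norm_cocompact_atTop)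
  exact pfc_aux_min hGsc hcoer

theorem pfc_unique_minimizer
    {Ω : Type*} [MeasurableSpace Ω] (P : Measure Ω) [IsFiniteMeasure P]
    (V : Submodule ℝ (Ω → ℝ)) [FiniteDimensional ℝ V]
    (hVL4 : ∀ v : Ω → ℝ, v ∈ V → MemLp v 4 P)
    (N : V → ℝ)
    (hN0 : ∀ v : V, N v = 0 ↔ v = 0)
    (hNsmul : ∀ (a : ℝ) (v : V), N (a • v) = |a| * N v)
    (hNtri : ∀ v w : V, N (v + w) ≤ N v + N w)
    (q : V →ₗ[ℝ] V →ₗ[ℝ] ℝ)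
    (hqsymm : ∀ v w : V, q v w = q w v)
    (C₀ : ℝ) (hC₀ : 0 < C₀)
    (hqcoer : ∀ v : V, C₀ * (N v) ^ 2 ≤ q v v)
    (L : V →ₗ[ℝ] ℝ) (c : ℝ) (ε : ℝ) (hε : ε ≤ 1)
    (G : V → ℝ)
    (hG : ∀ v : V, G v =
      (1 / 2) * q v v + (1 / 4) * (∫ x, ((v : Ω → ℝ) x + c) ^ 4 ∂P)
        + ((1 - ε) / 2) * (∫ x, ((v : Ω → ℝ) x + c) ^ 2 ∂P) + L v) :
    ∃! vstar : V, ∀ v : V, G vstar ≤ G v := by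
  classical
  letI : NormedAddCommGroup V := AddGroupNorm.toNormedAddCommGroup
    { toFun := N
      map_zero' := (hN0 0).mpr rfl
      add_le' := hNtri
      neg' := fun v => by
        rw [show (-v : V) = (-1 : ℝ) • v from (neg_one_smul ℝ v).symm, hNsmul]
        norm_num
      eq_zero_of_map_eq_zero' := fun v h => (hN0 v).1 h }
  letI : NormedSpace ℝ V :=
    ⟨fun a v => by rw [Real.norm_eq_abs]; exact le_of_eq (hNsmul a v)⟩
  have hnorm : ∀ v : V, ‖v‖ = N v := fun v => rfl
  have h1ε : (0:ℝ) ≤ (1 - ε) / 2 := by linarith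
  -- integrability
  have mem4 : ∀ v : V, MemLp (fun x => (v : Ω → ℝ) x + c) 4 P :=
    fun v => (hVL4 v v.2).add (memLp_const c)
  have int4 : ∀ v : V, Integrable (fun x => ((v : Ω → ℝ) x + c) ^ 4) P := by
    intro v
    have h := (mem4 v).integrable_norm_rpow (by norm_num) (by norm_num)
    have he : (fun x => ‖(v : Ω → ℝ) x + c‖ ^ (4 : ℝ≥0∞).toReal)
        = fun x => ((v : Ω → ℝ) x + c) ^ 4 := by
      funext x
      rw [ENNReal.toReal_ofNat, Real.norm_eq_abs,
        show ((4:ℝ) = ((4:ℕ):ℝ)) by norm_num, Real.rpow_natCast,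
        (by decide : Even 4).pow_abs]
    rwa [he] at h
  have int2 : ∀ v : V, Integrable (fun x => ((v : Ω → ℝ) x + c) ^ 2) P := by
    intro v
    have h := ((mem4 v).mono_exponent
      (by norm_num : (2:ℝ≥0∞) ≤ 4)).integrable_norm_rpow (by norm_num) (by norm_num)
    have he : (fun x => ‖(v : Ω → ℝ) x + c‖ ^ (2 : ℝ≥0∞).toReal)
        = fun x => ((v : Ω → ℝ) x + c) ^ 2 := by
      funext x
      rw [ENNReal.toReal_ofNat, Real.norm_eq_abs,
        show ((2:ℝ) = ((2:ℕ):ℝ)) by norm_num, Real.rpow_natCast,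
        (by decide : Even 2).pow_abs]
    rwa [he] at h
  -- convexity of the integral terms
  have convI : ∀ n : ℕ, Even n →
      (∀ u : V, Integrable (fun x => ((u : Ω → ℝ) x + c) ^ n) P) →
      ConvexOn ℝ (Set.univ : Set V) (fun v => ∫ x, ((v : Ω → ℝ) x + c) ^ n ∂P) := by
    intro n hn intn
    refine ⟨convex_univ, fun v _ w _ a b ha hb hab => ?_⟩
    have hpt : ∀ x, (((a • v + b • w : V) : Ω → ℝ) x + c) ^ n
        ≤ a * (((v : Ω → ℝ) x + c) ^ n) + b * (((w : Ω → ℝ) x + c) ^ n) := by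
      intro x
      have hco : ((a • v + b • w : V) : Ω → ℝ) x + c
          = a * ((v : Ω → ℝ) x + c) + b * ((w : Ω → ℝ) x + c) := by
        have h0 : ((a • v + b • w : V) : Ω → ℝ) x
            = a * (v : Ω → ℝ) x + b * (w : Ω → ℝ) x := by simp
        rw [h0]; linear_combination (-c) * hab
      have h := (hn.convexOn_pow).2 (Set.mem_univ ((v : Ω → ℝ) x + c))
        (Set.mem_univ ((w : Ω → ℝ) x + c)) ha hb hab
      rw [hco]
      simpa only [smul_eq_mul] using h
    have hint : ∫ x, (((a • v + b • w : V) : Ω → ℝ) x + c) ^ n ∂P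
        ≤ ∫ x, (a * (((v : Ω → ℝ) x + c) ^ n) + b * (((w : Ω → ℝ) x + c) ^ n)) ∂P :=
      integral_mono (intn _) (((intn v).const_mul a).add ((intn w).const_mul b)) hpt
    rw [integral_add ((intn v).const_mul a) ((intn w).const_mul b),
      integral_const_mul, integral_const_mul] at hint
    simpa only [smul_eq_mul] using hint
  -- finish via the abstract lemma
  have hqcoer' : ∀ v : V, C₀ * ‖v‖ ^ 2 ≤ q v v := by
    intro v; rw [hnorm]; exact hqcoer v
  have hI4nn : ∀ v : V, 0 ≤ ∫ x, ((v : Ω → ℝ) x + c) ^ 4 ∂P :=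
    fun v => integral_nonneg fun x => by positivity
  have hI2nn : ∀ v : V, 0 ≤ ∫ x, ((v : Ω → ℝ) x + c) ^ 2 ∂P :=
    fun v => integral_nonneg fun x => by positivity
  exact pfc_aux q hqsymm C₀ hC₀ hqcoer' L _ _
    (convI 4 (by decide) int4) (convI 2 (by decide) int2) hI4nn hI2nn
    ((1 - ε)/2) h1ε G hG
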